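/- arXiv:2605.30735 — 7 statements merged into one kernel-verified Lean document; each statement's English description precedes it below -/
import Mathlib

section
/- Ξ₂ is a barrier function on 𝒬_phys: if (Qₖ) is a sequence in 𝒬_phys converging to a real symmetric traceless 3×3 matrix Q₀ that has −1/3 or 2/3 as an eigenvalue, then Ξ₂(Qₖ) → +∞. -/
open Filter Matrix Topology


lemma isHerm_of_isSymm {M : Matrix (Fin 3) (Fin 3) ℝ} (h : M.IsSymm) : M.IsHermitian := by
  rw [Matrix.IsHermitian, Matrix.conjTranspose_eq_transpose_of_trivial]
  exact h

lemma det_aff {M : Matrix (Fin 3) (Fin 3) ℝ} (hH : M.IsHermitian) (a b : ℝ) :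
    (a • (1 : Matrix (Fin 3) (Fin 3) ℝ) + b • M).det = ∏ i, (a + b * hH.eigenvalues i) := by
  have hU : (hH.eigenvectorUnitary : Matrix (Fin 3) (Fin 3) ℝ) *
      star (hH.eigenvectorUnitary : Matrix (Fin 3) (Fin 3) ℝ) = 1 :=
    (Matrix.mem_unitaryGroup_iff).mp hH.eigenvectorUnitary.2
  have hd : (Matrix.diagonal (fun i => a + b * hH.eigenvalues i)) =
      a • (1 : Matrix (Fin 3) (Fin 3) ℝ) +
        b • Matrix.diagonal (RCLike.ofReal ∘ hH.eigenvalues) := by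
    ext i j
    rcases eq_or_ne i j with h | h
    · subst h; simp [Matrix.diagonal_apply_eq]
    · simp [Matrix.diagonal_apply_ne _ h, Matrix.one_apply_ne h]
  have key : a • (1 : Matrix (Fin 3) (Fin 3) ℝ) + b • M =
      (hH.eigenvectorUnitary : Matrix (Fin 3) (Fin 3) ℝ) *
        (Matrix.diagonal (fun i => a + b * hH.eigenvalues i)) *
        star (hH.eigenvectorUnitary : Matrix (Fin 3) (Fin 3) ℝ) := by
    rw [hd, Matrix.mul_add, Matrix.add_mul, Matrix.mul_smul, Matrix.smul_mul,
      Matrix.mul_smul, Matrix.smul_mul, Matrix.mul_one, hU]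
    exact congrArg (fun X => a • (1 : Matrix (Fin 3) (Fin 3) ℝ) + b • X) hH.spectral_theorem
  rw [key, Matrix.det_mul_right_comm, hU, one_mul, Matrix.det_diagonal]


/-- The set of real symmetric traceless 3×3 matrices whose eigenvalues all lie in
the open interval (−1/3, 2/3). -/
def Qphys : Set (Matrix (Fin 3) (Fin 3) ℝ) :=
  {Q | Q.IsSymm ∧ Q.trace = 0 ∧ spectrum ℝ Q ⊆ Set.Ioo (-(1/3) : ℝ) (2/3)}

/-- The second-order quasi-entropy Ξ₂(Q) = −log det(Q + I/3) − 2 log det(I/3 − Q/2). -/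
noncomputable def Xi2 (Q : Matrix (Fin 3) (Fin 3) ℝ) : ℝ :=
  - Real.log (Q + (1/3 : ℝ) • (1 : Matrix (Fin 3) (Fin 3) ℝ)).det
    - 2 * Real.log ((1/3 : ℝ) • (1 : Matrix (Fin 3) (Fin 3) ℝ) - (1/2 : ℝ) • Q).det

/-- Ξ₂ is a barrier function on 𝒬_phys: along any sequence in 𝒬_phys converging to a
symmetric traceless matrix having −1/3 or 2/3 as an eigenvalue, Ξ₂ tends to +∞. -/
theorem Xi2_barrier (Q : ℕ → Matrix (Fin 3) (Fin 3) ℝ) (hQ : ∀ k, Q k ∈ Qphys)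
    (Q₀ : Matrix (Fin 3) (Fin 3) ℝ) (hsymm : Q₀.IsSymm) (htr : Q₀.trace = 0)
    (heig : (-(1/3) : ℝ) ∈ spectrum ℝ Q₀ ∨ (2/3 : ℝ) ∈ spectrum ℝ Q₀)
    (hlim : Tendsto Q atTop (nhds Q₀)) :
    Tendsto (fun k => Xi2 (Q k)) atTop atTop := by
  have hHk : ∀ k, (Q k).IsHermitian := fun k => isHerm_of_isSymm (hQ k).1
  have hev : ∀ k i, (hHk k).eigenvalues i ∈ Set.Ioo (-(1/3) : ℝ) (2/3) :=
    fun k i => (hQ k).2.2 ((hHk k).eigenvalues_mem_spectrum_real i)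
  set d1 : ℕ → ℝ := fun k => (Q k + (1/3 : ℝ) • (1 : Matrix (Fin 3) (Fin 3) ℝ)).det with hd1def
  set d2 : ℕ → ℝ := fun k =>
    ((1/3 : ℝ) • (1 : Matrix (Fin 3) (Fin 3) ℝ) - (1/2 : ℝ) • Q k).det with hd2def
  have hXi : ∀ k, Xi2 (Q k) = - Real.log (d1 k) - 2 * Real.log (d2 k) := fun k => rfl
  have hd1eq : ∀ k, d1 k = ∏ i, (1/3 + 1 * (hHk k).eigenvalues i) := by
    intro k
    have : Q k + (1/3 : ℝ) • (1 : Matrix (Fin 3) (Fin 3) ℝ) =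
        (1/3 : ℝ) • (1 : Matrix (Fin 3) (Fin 3) ℝ) + (1 : ℝ) • Q k := by module
    rw [hd1def]
    simp only [this]
    exact det_aff (hHk k) _ _
  have hd2eq : ∀ k, d2 k = ∏ i, (1/3 + (-(1/2)) * (hHk k).eigenvalues i) := by
    intro k
    have : (1/3 : ℝ) • (1 : Matrix (Fin 3) (Fin 3) ℝ) - (1/2 : ℝ) • Q k =
        (1/3 : ℝ) • (1 : Matrix (Fin 3) (Fin 3) ℝ) + (-(1/2) : ℝ) • Q k := by module
    rw [hd2def]
    simp only [this]
    exact det_aff (hHk k) _ _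
  have h1pos : ∀ k, 0 < d1 k := by
    intro k
    rw [hd1eq k]
    exact Finset.prod_pos fun i _ => by nlinarith [(hev k i).1, (hev k i).2]
  have h2pos : ∀ k, 0 < d2 k := by
    intro k
    rw [hd2eq k]
    exact Finset.prod_pos fun i _ => by nlinarith [(hev k i).1, (hev k i).2]
  have h1le : ∀ k, d1 k ≤ 1 := by
    intro k
    rw [hd1eq k]
    exact Finset.prod_le_one (fun i _ => by nlinarith [(hev k i).1, (hev k i).2])
      (fun i _ => by nlinarith [(hev k i).1, (hev k i).2])
  have h2le : ∀ k, d2 k ≤ 1 := by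
    intro k
    rw [hd2eq k]
    exact Finset.prod_le_one (fun i _ => by nlinarith [(hev k i).1, (hev k i).2])
      (fun i _ => by nlinarith [(hev k i).1, (hev k i).2])
  have hlog1 : ∀ k, Real.log (d1 k) ≤ 0 := fun k => Real.log_nonpos (h1pos k).le (h1le k)
  have hlog2 : ∀ k, Real.log (d2 k) ≤ 0 := fun k => Real.log_nonpos (h2pos k).le (h2le k)
  have hdetQ0 : ∀ μ ∈ spectrum ℝ Q₀, ((μ • (1 : Matrix (Fin 3) (Fin 3) ℝ)) - Q₀).det = 0 := by
    intro μ hμ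
    rw [spectrum.mem_iff, Algebra.algebraMap_eq_smul_one] at hμ
    by_contra h
    exact hμ ((Matrix.isUnit_iff_isUnit_det _).2 (isUnit_iff_ne_zero.2 h))
  have hdet := Continuous.matrix_det (continuous_id : Continuous
    (fun A : Matrix (Fin 3) (Fin 3) ℝ => A))
  rcases heig with hμ | hμ
  · -- det (Q₀ + (1/3)•1) = 0
    have hzero : (Q₀ + (1/3 : ℝ) • (1 : Matrix (Fin 3) (Fin 3) ℝ)).det = 0 := by
      have h0 := hdetQ0 _ hμ
      have heq : Q₀ + (1/3 : ℝ) • (1 : Matrix (Fin 3) (Fin 3) ℝ) =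
          -((-(1/3) : ℝ) • (1 : Matrix (Fin 3) (Fin 3) ℝ) - Q₀) := by module
      rw [heq, Matrix.det_neg, h0, mul_zero]
    have hc1 : Tendsto d1 atTop (𝓝 0) := by
      rw [← hzero]
      exact (hdet.tendsto _).comp (hlim.add tendsto_const_nhds)
    have hlb : Tendsto (fun k => Real.log (d1 k)) atTop atBot :=
      Real.tendsto_log_nhdsGT_zero.comp
        (tendsto_nhdsWithin_of_tendsto_nhds_of_eventually_within _ hc1
          (Eventually.of_forall fun k => h1pos k))
    refine tendsto_atTop_mono (fun k => ?_) (tendsto_neg_atBot_atTop.comp hlb)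
    rw [hXi k]
    simp only [Function.comp_apply]
    linarith [hlog2 k]
  · -- det ((1/3)•1 - (1/2)•Q₀) = 0
    have hzero : ((1/3 : ℝ) • (1 : Matrix (Fin 3) (Fin 3) ℝ) - (1/2 : ℝ) • Q₀).det = 0 := by
      have h0 := hdetQ0 _ hμ
      have heq : (1/3 : ℝ) • (1 : Matrix (Fin 3) (Fin 3) ℝ) - (1/2 : ℝ) • Q₀ =
          (1/2 : ℝ) • ((2/3 : ℝ) • (1 : Matrix (Fin 3) (Fin 3) ℝ) - Q₀) := by module
      rw [heq, Matrix.det_smul, h0, mul_zero]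
    have hc2 : Tendsto d2 atTop (𝓝 0) := by
      rw [← hzero]
      exact (hdet.tendsto _).comp (tendsto_const_nhds.sub (hlim.const_smul (1/2 : ℝ)))
    have hlb : Tendsto (fun k => Real.log (d2 k)) atTop atBot :=
      Real.tendsto_log_nhdsGT_zero.comp
        (tendsto_nhdsWithin_of_tendsto_nhds_of_eventually_within _ hc2
          (Eventually.of_forall fun k => h2pos k))
    have hlb2 : Tendsto (fun k => -(2 * Real.log (d2 k))) atTop atTop :=
      tendsto_neg_atBot_atTop.comp (hlb.const_mul_atBot two_pos)
    refine tendsto_atTop_mono (fun k => ?_) hlb2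
    rw [hXi k]
    linarith [hlog1 k]
end

section
/- Let c ∈ ℝ and Q ∈ 𝒬_phys. If there exists μ ∈ ℝ such that −(Q + I/3)⁻¹ + (I/3 − Q/2)⁻¹ − c·Q = μ·I (i.e., Q is a stationary point of the bulk energy Ξ₂(Q) − (c/2)|Q|² within the space of symmetric traceless matrices), then Q is uniaxial: there exist s ∈ ℝ and a unit vector n ∈ ℝ³ with Q = s(n nᵀ − I/3); equivalently, Q has at most two distinct eigenvalues. -/
open Matrix

set_option maxHeartbeats 1000000

/-- scalar collapse lemma -/
lemma collapse_aux (c μ x y z : ℝ)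
    (hx : -(1/3) < x) (hx' : x < 2/3) (hy : -(1/3) < y) (hy' : y < 2/3)
    (hz : -(1/3) < z) (hz' : z < 2/3) (hsum : x + y + z = 0)
    (ex : -(x+1/3)⁻¹ + (1/3 - x/2)⁻¹ - c*x = μ)
    (ey : -(y+1/3)⁻¹ + (1/3 - y/2)⁻¹ - c*y = μ)
    (ez : -(z+1/3)⁻¹ + (1/3 - z/2)⁻¹ - c*z = μ) :
    x = y ∨ x = z ∨ y = z := by
  by_contra h
  push_neg at h
  obtain ⟨hxy, hxz, hyz⟩ := h
  have hx3 : x + 1/3 ≠ 0 := by linarith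
  have hx6 : 1/3 - x/2 ≠ 0 := by linarith
  have hy3 : y + 1/3 ≠ 0 := by linarith
  have hy6 : 1/3 - y/2 ≠ 0 := by linarith
  have hz3 : z + 1/3 ≠ 0 := by linarith
  have hz6 : 1/3 - z/2 ≠ 0 := by linarith
  have hX := mul_inv_cancel₀ hx3
  have hY := mul_inv_cancel₀ hy3
  have hZ := mul_inv_cancel₀ hz3
  have hU := mul_inv_cancel₀ hx6
  have hV := mul_inv_cancel₀ hy6
  have hW := mul_inv_cancel₀ hz6
  set a := (x+1/3)⁻¹ with ha
  set b := (y+1/3)⁻¹ with hb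
  set d := (z+1/3)⁻¹ with hd
  set u := (1/3 - x/2)⁻¹ with hu
  set v := (1/3 - y/2)⁻¹ with hv
  set w := (1/3 - z/2)⁻¹ with hw
  have pair : ∀ p q : ℝ, ∀ ap bq up vq : ℝ, (p+1/3)*ap = 1 → (q+1/3)*bq = 1 →
      (1/3 - p/2)*up = 1 → (1/3 - q/2)*vq = 1 → p - q ≠ 0 →
      (-ap + up - c*p = μ) → (-bq + vq - c*q = μ) →
      ap*bq + (1/2)*(up*vq) = c := by
    intro p q ap bq up vq hA hB hC hD hpq e1 e2
    have key : ((-ap + up - c*p) - (-bq + vq - c*q))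
        = (p - q) * ((ap*bq + (1/2)*(up*vq)) - c) := by
      linear_combination ap * hB - bq * hA + vq * hC - up * hD
    rw [e1, e2, sub_self] at key
    have h0 := (mul_eq_zero.mp key.symm).resolve_left hpq
    linarith [sub_eq_zero.mp h0]
  have p1 := pair x y a b u v hX hY hU hV (sub_ne_zero.mpr hxy) ex ey
  have p2 := pair x z a d u w hX hZ hU hW (sub_ne_zero.mpr hxz) ex ez
  have key2 : (a*b + (1/2)*(u*v)) - (a*d + (1/2)*(u*w))
      = (z - y) * (a*b*d - (1/4)*(u*v*w)) := by
    linear_combination (a*d) * hY - (a*b) * hZ + (u*w/2) * hV - (u*v/2) * hW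
  rw [p1, p2, sub_self] at key2
  have hzy : z - y ≠ 0 := sub_ne_zero.mpr (fun h => hyz h.symm)
  have habd := (mul_eq_zero.mp key2.symm).resolve_left hzy
  have hkey : a*b*d = (1/4)*(u*v*w) := by
    have := sub_eq_zero.mp habd; linarith
  have h1 : ((x+1/3)*(y+1/3)*(z+1/3)) * (a*b*d) = 1 := by
    linear_combination (b*(y+1/3)*d*(z+1/3)) * hX + (d*(z+1/3)) * hY + hZ
  have h2 : ((1/3-x/2)*(1/3-y/2)*(1/3-z/2)) * (u*v*w) = 1 := by
    linear_combination (v*(1/3-y/2)*w*(1/3-z/2)) * hU + (w*(1/3-z/2)) * hV + hW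
  have huvw : u*v*w ≠ 0 := by
    intro h0; rw [h0, mul_zero] at h2; norm_num at h2
  have hmain : (u*v*w) * ((x+1/3)*(y+1/3)*(z+1/3)/4
      - (1/3-x/2)*(1/3-y/2)*(1/3-z/2)) = 0 := by
    linear_combination h1 - h2 - ((x+1/3)*(y+1/3)*(z+1/3)) * hkey
  have hP : (x+1/3)*(y+1/3)*(z+1/3) = 4*((1/3-x/2)*(1/3-y/2)*(1/3-z/2)) := by
    have := (mul_eq_zero.mp hmain).resolve_left huvw
    linarith
  have hprod : x*y*z = 2/27 := by
    linear_combination (2/3)*hP - (2/9)*hsum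
  have hposs : 0 < x ∨ 0 < y ∨ 0 < z := by
    by_contra h
    push_neg at h
    obtain ⟨h1', h2', h3'⟩ := h
    have hx0 : x = 0 := by linarith
    rw [hx0] at hprod; norm_num at hprod
  rcases hposs with ht | ht | ht
  · have hid : x*y*z = x^3/4 - x*(y-z)^2/4 := by
      linear_combination (x*(y+z-x)/4) * hsum
    have h3 : x^3 < (2/3:ℝ)^3 := pow_lt_pow_left₀ hx' ht.le (n := 3) three_ne_zero
    nlinarith [mul_nonneg ht.le (sq_nonneg (y - z))]
  · have hid : x*y*z = y^3/4 - y*(x-z)^2/4 := by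
      linear_combination (y*(x+z-y)/4) * hsum
    have h3 : y^3 < (2/3:ℝ)^3 := pow_lt_pow_left₀ hy' ht.le (n := 3) three_ne_zero
    nlinarith [mul_nonneg ht.le (sq_nonneg (x - z))]
  · have hid : x*y*z = z^3/4 - z*(x-y)^2/4 := by
      linear_combination (z*(x+y-z)/4) * hsum
    have h3 : z^3 < (2/3:ℝ)^3 := pow_lt_pow_left₀ hz' ht.le (n := 3) three_ne_zero
    nlinarith [mul_nonneg ht.le (sq_nonneg (x - y))]


lemma diag_const (r : ℝ) :
    Matrix.diagonal (fun _ : Fin 3 => r) = r • (1 : Matrix (Fin 3) (Fin 3) ℝ) := by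
  ext i j
  simp [Matrix.diagonal_apply, Matrix.one_apply, mul_ite, mul_one, mul_zero]

/-- building the uniaxial form once two eigenvalues coincide -/
lemma uniaxial_of_two_eq (U : Matrix (Fin 3) (Fin 3) ℝ) (d : Fin 3 → ℝ)
    (hU1 : U * star U = 1) (hU2 : star U * U = 1) (k : Fin 3) (β : ℝ)
    (hd : ∀ t, t ≠ k → d t = β) (hsum : d 0 + d 1 + d 2 = 0)
    (Q : Matrix (Fin 3) (Fin 3) ℝ) (hQd : Q = U * diagonal d * star U) :
    ∃ (s : ℝ) (n : Fin 3 → ℝ), (∑ i, n i ^ 2 = 1) ∧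
      Q = s • (Matrix.vecMulVec n n - (1/3 : ℝ) • (1 : Matrix (Fin 3) (Fin 3) ℝ)) := by
  set s := d k - β with hs0
  refine ⟨s, fun t => U t k, ?_, ?_⟩
  · have := congrFun (congrFun hU2 k) k
    simp only [Matrix.mul_apply, Matrix.star_apply, star_trivial, Matrix.one_apply_eq] at this
    calc (∑ i, U i k ^ 2) = ∑ i, U i k * U i k := by
          refine Finset.sum_congr rfl fun i _ => by ring
      _ = 1 := this
  · have h2 : d 0 + d 1 + d 2 = 2*β + d k := by
      fin_cases k
      · rw [hd 1 (by decide), hd 2 (by decide)]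
        show d 0 + β + β = 2*β + d 0
        ring
      · rw [hd 0 (by decide), hd 2 (by decide)]
        show β + d 1 + β = 2*β + d 1
        ring
      · rw [hd 0 (by decide), hd 1 (by decide)]
        show β + β + d 2 = 2*β + d 2
        ring
    have hβ : β = -s/3 := by rw [hs0]; linarith
    have hdiag : diagonal d = β • (1 : Matrix (Fin 3) (Fin 3) ℝ)
        + s • diagonal (fun t => if t = k then (1:ℝ) else 0) := by
      rw [← diag_const β, ← diagonal_smul, diagonal_add]
      refine congrArg diagonal (funext fun t => ?_)
      by_cases h : t = k
      · subst h
        simp [hs0]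
      · simp only [Pi.smul_apply, smul_eq_mul]
        rw [if_neg h, mul_zero, add_zero]
        exact hd t h
    have hproj : U * diagonal (fun t => if t = k then (1:ℝ) else 0) * star U
        = vecMulVec (fun t => U t k) (fun t => U t k) := by
      ext p q
      simp only [Matrix.mul_apply, Matrix.diagonal_apply, Matrix.star_apply, star_trivial,
        vecMulVec_apply, mul_ite, mul_one, mul_zero, ite_mul, zero_mul,
        Finset.sum_ite_eq', Finset.sum_ite_eq, Finset.mem_univ, if_true]
    have hdist : U * (β • (1 : Matrix (Fin 3) (Fin 3) ℝ)
        + s • diagonal (fun t => if t = k then (1:ℝ) else 0)) * star U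
        = β • (U * (1 : Matrix (Fin 3) (Fin 3) ℝ) * star U)
          + s • (U * diagonal (fun t => if t = k then (1:ℝ) else 0) * star U) := by
      rw [Matrix.mul_add, Matrix.add_mul, mul_smul_comm, mul_smul_comm, smul_mul_assoc,
        smul_mul_assoc]
    rw [hQd, hdiag, hdist, mul_one, hU1, hproj, hβ]
    module

/-- A stationary point of the bulk energy Ξ₂(Q) − (c/2)|Q|² within the symmetric traceless
matrices (i.e. −(Q+I/3)⁻¹ + (I/3−Q/2)⁻¹ − cQ = μI for some Lagrange multiplier μ)
is uniaxial: Q = s (n nᵀ − I/3) for some s ∈ ℝ and unit vector n. -/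
theorem stationary_point_is_uniaxial (c : ℝ) (Q : Matrix (Fin 3) (Fin 3) ℝ) (hQ : Q ∈ Qphys)
    (hstat : ∃ μ : ℝ,
      -(Q + (1/3 : ℝ) • (1 : Matrix (Fin 3) (Fin 3) ℝ))⁻¹
        + ((1/3 : ℝ) • (1 : Matrix (Fin 3) (Fin 3) ℝ) - (1/2 : ℝ) • Q)⁻¹
        - c • Q = μ • (1 : Matrix (Fin 3) (Fin 3) ℝ)) :
    ∃ (s : ℝ) (n : Fin 3 → ℝ), (∑ i, n i ^ 2 = 1) ∧
      Q = s • (Matrix.vecMulVec n n - (1/3 : ℝ) • (1 : Matrix (Fin 3) (Fin 3) ℝ)) := by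
  obtain ⟨hsymm, htr, hspec⟩ := hQ
  obtain ⟨μ, hstat⟩ := hstat
  have hH : Q.IsHermitian := by
    rw [Matrix.IsHermitian, conjTranspose_eq_transpose_of_trivial]; exact hsymm
  set U : Matrix (Fin 3) (Fin 3) ℝ := (hH.eigenvectorUnitary : Matrix (Fin 3) (Fin 3) ℝ)
    with hUdef
  set d : Fin 3 → ℝ := hH.eigenvalues with hddef
  have hU1 : U * star U = 1 := (Matrix.mem_unitaryGroup_iff).mp hH.eigenvectorUnitary.2
  have hU2 : star U * U = 1 := (Matrix.mem_unitaryGroup_iff').mp hH.eigenvectorUnitary.2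
  have hQd : Q = U * diagonal d * star U := by
    have := hH.spectral_theorem
    simpa [RCLike.ofReal_real_eq_id] using this
  have hb : ∀ i, d i ∈ Set.Ioo (-(1/3) : ℝ) (2/3) :=
    fun i => hspec (hH.eigenvalues_mem_spectrum_real i)
  have hsum : d 0 + d 1 + d 2 = 0 := by
    have h : Q.trace = d 0 + d 1 + d 2 := by
      rw [hQd, Matrix.trace_mul_cycle, hU2, one_mul, trace_diagonal, Fin.sum_univ_three]
    rw [htr] at h
    linarith
  have conjinv : ∀ e : Fin 3 → ℝ, (∀ i, e i ≠ 0) →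
      (U * diagonal e * star U)⁻¹ = U * diagonal (fun i => (e i)⁻¹) * star U := by
    intro e he
    apply Matrix.inv_eq_right_inv
    have step : U * diagonal e * star U * (U * diagonal (fun i => (e i)⁻¹) * star U)
        = U * (diagonal e * (star U * U) * diagonal (fun i => (e i)⁻¹)) * star U := by
      simp only [Matrix.mul_assoc]
    rw [step, hU2, mul_one, diagonal_mul_diagonal]
    have : (fun i => e i * (e i)⁻¹) = fun _ => (1:ℝ) :=
      funext fun i => mul_inv_cancel₀ (he i)
    rw [this, Matrix.diagonal_one, mul_one, hU1]
  have e1 : Q + (1/3 : ℝ) • (1 : Matrix (Fin 3) (Fin 3) ℝ)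
      = U * diagonal (fun i => d i + 1/3) * star U := by
    have hdg : diagonal (fun i => d i + 1/3)
        = diagonal d + (1/3 : ℝ) • (1 : Matrix (Fin 3) (Fin 3) ℝ) := by
      rw [← diag_const (1/3 : ℝ), diagonal_add]
    rw [hdg, Matrix.mul_add, Matrix.add_mul, mul_smul_comm, smul_mul_assoc, mul_one, hU1, hQd]
  have e2 : (1/3 : ℝ) • (1 : Matrix (Fin 3) (Fin 3) ℝ) - (1/2 : ℝ) • Q
      = U * diagonal (fun i => 1/3 - d i / 2) * star U := by
    have hdg : diagonal (fun i => 1/3 - d i / 2)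
        = (1/3 : ℝ) • (1 : Matrix (Fin 3) (Fin 3) ℝ) - (1/2 : ℝ) • diagonal d := by
      rw [← diag_const (1/3 : ℝ), ← diagonal_smul, diagonal_sub]
      refine congrArg diagonal (funext fun t => ?_)
      simp only [Pi.smul_apply, smul_eq_mul]
      ring
    rw [hdg, Matrix.mul_sub, Matrix.sub_mul, mul_smul_comm, mul_smul_comm, smul_mul_assoc,
      smul_mul_assoc, mul_one, hU1, hQd]
  have hinv1 : (Q + (1/3 : ℝ) • (1 : Matrix (Fin 3) (Fin 3) ℝ))⁻¹
      = U * diagonal (fun i => (d i + 1/3)⁻¹) * star U := by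
    rw [e1]; exact conjinv _ (fun i => ne_of_gt (by linarith [(hb i).1]))
  have hinv2 : ((1/3 : ℝ) • (1 : Matrix (Fin 3) (Fin 3) ℝ) - (1/2 : ℝ) • Q)⁻¹
      = U * diagonal (fun i => (1/3 - d i / 2)⁻¹) * star U := by
    rw [e2]; exact conjinv _ (fun i => ne_of_gt (by linarith [(hb i).2]))
  have hcQ : c • Q = U * diagonal (fun i => c * d i) * star U := by
    have hdg : diagonal (fun i => c * d i) = c • diagonal d := by
      rw [← diagonal_smul]
      congr 1
    rw [hdg, mul_smul_comm, smul_mul_assoc, hQd]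
  have hfull : U * diagonal (fun i => -(d i + 1/3)⁻¹ + (1/3 - d i/2)⁻¹ - c * d i) * star U
      = μ • (1 : Matrix (Fin 3) (Fin 3) ℝ) := by
    have hdg : diagonal (fun i => -(d i + 1/3)⁻¹ + (1/3 - d i/2)⁻¹ - c * d i)
        = -(diagonal (fun i => (d i + 1/3)⁻¹)) + diagonal (fun i => (1/3 - d i/2)⁻¹)
          - diagonal (fun i => c * d i) := by
      rw [diagonal_neg, diagonal_add, diagonal_sub]
    rw [hdg, Matrix.mul_sub, Matrix.sub_mul, Matrix.mul_add, Matrix.add_mul,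
      Matrix.mul_neg, Matrix.neg_mul, ← hinv1, ← hinv2, ← hcQ, hstat]
  have heig : ∀ i, -(d i + 1/3)⁻¹ + (1/3 - d i/2)⁻¹ - c * d i = μ := by
    intro i
    have step : star U * (U * diagonal (fun i => -(d i + 1/3)⁻¹ + (1/3 - d i/2)⁻¹ - c * d i)
        * star U) * U
        = diagonal (fun i => -(d i + 1/3)⁻¹ + (1/3 - d i/2)⁻¹ - c * d i) := by
      calc star U * (U * diagonal (fun i => -(d i + 1/3)⁻¹ + (1/3 - d i/2)⁻¹ - c * d i)
            * star U) * U
          = (star U * U) * diagonal (fun i => -(d i + 1/3)⁻¹ + (1/3 - d i/2)⁻¹ - c * d i)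
            * (star U * U) := by
            simp only [Matrix.mul_assoc]
        _ = _ := by rw [hU2, one_mul, mul_one]
    have hDeq : diagonal (fun i => -(d i + 1/3)⁻¹ + (1/3 - d i/2)⁻¹ - c * d i)
        = μ • (1 : Matrix (Fin 3) (Fin 3) ℝ) := by
      rw [← step, hfull, mul_smul_comm, smul_mul_assoc, mul_one, hU2]
    have := congrFun (congrFun hDeq i) i
    simpa [Matrix.diagonal_apply_eq, Matrix.smul_apply, Matrix.one_apply_eq] using this
  have hcol := collapse_aux c μ (d 0) (d 1) (d 2)
    (hb 0).1 (hb 0).2 (hb 1).1 (hb 1).2 (hb 2).1 (hb 2).2 hsum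
    (by linarith [heig 0]) (by linarith [heig 1]) (by linarith [heig 2])
  rcases hcol with h01 | h02 | h12
  · refine uniaxial_of_two_eq U d hU1 hU2 2 (d 0) (fun t ht => ?_) hsum Q hQd
    fin_cases t
    · rfl
    · exact h01.symm
    · exact absurd rfl ht
  · refine uniaxial_of_two_eq U d hU1 hU2 1 (d 0) (fun t ht => ?_) hsum Q hQd
    fin_cases t
    · rfl
    · exact absurd rfl ht
    · exact h02.symm
  · refine uniaxial_of_two_eq U d hU1 hU2 0 (d 1) (fun t ht => ?_) hsum Q hQd
    fin_cases t
    · exact absurd rfl ht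
    · rfl
    · exact h12.symm
end

section
/- Let f : S² → ℝ be continuous with f(m) > 0 for all m ∈ S², and let W be a nonzero real symmetric traceless 3×3 matrix. Then ∫_{S²} |m × (W m)|² f(m) dσ(m) > 0. -/
open Matrix MeasureTheory Metric Pointwise

/-- The uniform (rotation-invariant) probability measure on the unit sphere S² ⊆ ℝ³. -/
noncomputable def sphereSigma : Measure (sphere (0 : EuclideanSpace ℝ (Fin 3)) 1) :=
  (((volume : Measure (EuclideanSpace ℝ (Fin 3))).toSphere) Set.univ)⁻¹ •
    ((volume : Measure (EuclideanSpace ℝ (Fin 3))).toSphere)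

lemma cross_all_zero_imp (W : Matrix (Fin 3) (Fin 3) ℝ) (htr : W.trace = 0)
    (h : ∀ x : Fin 3 → ℝ, (∑ i, x i ^ 2) = 1 → crossProduct x (W *ᵥ x) = 0) : W = 0 := by
  have e0 := h ![1,0,0] (by simp [Fin.sum_univ_three])
  have e1 := h ![0,1,0] (by simp [Fin.sum_univ_three])
  have e2 := h ![0,0,1] (by simp [Fin.sum_univ_three])
  set s : ℝ := Real.sqrt 2⁻¹ with hs
  have hss : s * s = 2⁻¹ := Real.mul_self_sqrt (by norm_num)
  have d01 := h ![s,s,0] (by simp [Fin.sum_univ_three, pow_two, hss]; norm_num)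
  have d02 := h ![s,0,s] (by simp [Fin.sum_univ_three, pow_two, hss]; norm_num)
  simp [cross_apply, mulVec, dotProduct, Fin.sum_univ_three, funext_iff,
    Fin.forall_fin_succ] at e0 e1 e2 d01 d02
  have hW00 : W 1 1 = W 0 0 := by
    have := d01.2
    nlinarith [hss, Real.sqrt_pos.2 (by norm_num : (0:ℝ) < 2⁻¹)]
  have hW22 : W 2 2 = W 0 0 := by
    have := d02.1
    nlinarith [hss, Real.sqrt_pos.2 (by norm_num : (0:ℝ) < 2⁻¹)]
  have htr' : W 0 0 + W 1 1 + W 2 2 = 0 := by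
    simpa [Matrix.trace, Fin.sum_univ_three] using htr
  ext i j
  fin_cases i <;> fin_cases j <;> simp_all <;> linarith

lemma toSphere_univ_pos :
    0 < ((volume : Measure (EuclideanSpace ℝ (Fin 3))).toSphere) Set.univ := by
  rw [Measure.toSphere_apply_univ]
  refine ENNReal.mul_pos (by simp [finrank_euclideanSpace_fin]) ?_
  simpa using (measure_ball_pos volume (0 : EuclideanSpace ℝ (Fin 3)) one_pos).ne'

lemma toSphere_open_pos {U : Set (sphere (0 : EuclideanSpace ℝ (Fin 3)) 1)}
    (hU : IsOpen U) (hne : U.Nonempty) :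
    0 < ((volume : Measure (EuclideanSpace ℝ (Fin 3))).toSphere) U := by
  set E := EuclideanSpace ℝ (Fin 3)
  rw [Measure.toSphere_apply' _ hU.measurableSet]
  refine ENNReal.mul_pos (by simp [finrank_euclideanSpace_fin]) ?_
  obtain ⟨V, hV, rfl⟩ := isOpen_induced_iff.1 hU
  set C : Set E := Set.Ioo (0:ℝ) 1 • (Subtype.val '' (Subtype.val ⁻¹' V)) with hC
  have hCeq : C = {y : E | y ≠ 0} ∩
      (fun y : E => (‖y‖, ‖y‖⁻¹ • y)) ⁻¹' (Set.Iio (1:ℝ) ×ˢ V) := by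
    ext y
    constructor
    · rintro ⟨r, hr, x, hx, rfl⟩
      obtain ⟨x', hx', rfl⟩ := hx
      have hnx : ‖(x' : E)‖ = 1 := by simpa using mem_sphere_zero_iff_norm.1 x'.2
      have hy : ‖r • (x' : E)‖ = r := by
        rw [norm_smul, hnx, mul_one, Real.norm_eq_abs, abs_of_pos hr.1]
      refine ⟨?_, ?_, ?_⟩
      · simp only [Set.mem_setOf_eq]
        intro h0
        rw [h0, norm_zero] at hy
        exact hr.1.ne hy
      · simpa [hy] using hr.2
      · show ‖r • (x' : E)‖⁻¹ • r • (x' : E) ∈ V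
        rw [hy, smul_smul, inv_mul_cancel₀ hr.1.ne', one_smul]
        exact hx'
    · rintro ⟨h0, h1, h2⟩
      have hny : 0 < ‖y‖ := norm_pos_iff.2 h0
      have hmem : ‖y‖⁻¹ • y ∈ sphere (0 : E) 1 := by
        simp [norm_smul, abs_of_pos (inv_pos.2 hny), inv_mul_cancel₀ hny.ne']
      refine ⟨‖y‖, ⟨hny, h1⟩, ‖y‖⁻¹ • y, ⟨⟨‖y‖⁻¹ • y, hmem⟩, h2, rfl⟩, ?_⟩
      show ‖y‖ • ‖y‖⁻¹ • y = y
      rw [smul_smul, mul_inv_cancel₀ hny.ne', one_smul]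
  have hCopen : IsOpen C := by
    rw [hCeq]
    refine ContinuousOn.isOpen_inter_preimage ?_ isOpen_ne ((isOpen_Iio).prod hV)
    exact (continuous_norm.continuousOn).prodMk
      (((continuous_norm.continuousOn).inv₀ fun y hy => norm_ne_zero_iff.2 hy).smul
        continuousOn_id)
  have hCne : C.Nonempty := by
    obtain ⟨m₀, hm₀⟩ := hne
    exact ⟨(2⁻¹ : ℝ) • (m₀ : E), Set.mem_smul.2
      ⟨2⁻¹, by norm_num, (m₀ : E), ⟨m₀, hm₀, rfl⟩, rfl⟩⟩
  exact (hCopen.measure_pos volume hCne).ne'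

instance : IsFiniteMeasure sphereSigma := by
  constructor
  rw [sphereSigma, Measure.smul_apply, smul_eq_mul]
  exact ENNReal.mul_lt_top (ENNReal.inv_lt_top.2 toSphere_univ_pos) (measure_lt_top _ _)

/-- For a continuous positive density f on S² and a nonzero symmetric traceless W,
∫_{S²} |m × (W m)|² f(m) dσ(m) > 0 (positive definiteness of the dissipation operator). -/
theorem integral_cross_sq_pos (f : sphere (0 : EuclideanSpace ℝ (Fin 3)) 1 → ℝ)
    (hf : Continuous f) (hpos : ∀ m, 0 < f m)
    (W : Matrix (Fin 3) (Fin 3) ℝ) (hsymm : W.IsSymm) (htr : W.trace = 0) (hW : W ≠ 0) :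
    0 < ∫ m, (∑ k, (crossProduct (fun i => (m : EuclideanSpace ℝ (Fin 3)) i)
        (W *ᵥ fun i => (m : EuclideanSpace ℝ (Fin 3)) i) k) ^ 2) * f m ∂sphereSigma := by
  set E := EuclideanSpace ℝ (Fin 3)
  set g : sphere (0 : E) 1 → ℝ := fun m =>
    (∑ k, (crossProduct (fun i => (m : E) i) (W *ᵥ fun i => (m : E) i) k) ^ 2) * f m with hg
  have hgc : Continuous g := by
    refine Continuous.mul ?_ hf
    refine continuous_finset_sum _ fun k _ => ?_
    refine Continuous.pow ?_ 2
    have hcoord : Continuous fun m : sphere (0:E) 1 => fun i => (m : E) i := by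
      refine continuous_pi fun i => ?_
      exact (continuous_apply i).comp ((EuclideanSpace.equiv (Fin 3) ℝ).continuous.comp
        continuous_subtype_val)
    simp only [cross_apply]
    have hWv : Continuous fun m : sphere (0:E) 1 => W *ᵥ fun i => (m : E) i := by
      refine continuous_pi fun i => ?_
      simp only [mulVec, dotProduct]
      exact continuous_finset_sum _ fun j _ => continuous_const.mul
        ((continuous_apply j).comp hcoord)
    have hc : ∀ i, Continuous fun m : sphere (0:E) 1 => (m : E) i :=
      fun i => (continuous_apply i).comp hcoord
    have hw : ∀ i, Continuous fun m : sphere (0:E) 1 => (W *ᵥ fun i => (m : E) i) i :=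
      fun i => (continuous_apply i).comp hWv
    fin_cases k
    · exact ((hc 1).mul (hw 2)).sub ((hc 2).mul (hw 1))
    · exact ((hc 2).mul (hw 0)).sub ((hc 0).mul (hw 2))
    · exact ((hc 0).mul (hw 1)).sub ((hc 1).mul (hw 0))
  have hgnn : ∀ m, 0 ≤ g m := fun m =>
    mul_nonneg (Finset.sum_nonneg fun k _ => sq_nonneg _) (hpos m).le
  have hgi : Integrable g sphereSigma :=
    hgc.integrable_of_hasCompactSupport (isClosed_tsupport g).isCompact
  have hm₀ : ∃ m₀, 0 < g m₀ := by
    by_contra hc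
    push_neg at hc
    apply hW
    apply cross_all_zero_imp W htr
    intro x hx
    have hnorm : ‖(WithLp.toLp 2 x)‖ = 1 := by
      rw [EuclideanSpace.norm_eq]
      rw [show (∑ i, ‖(WithLp.toLp 2 x) i‖ ^ 2) = 1 by simpa [Real.norm_eq_abs, sq_abs] using hx]
      exact Real.sqrt_one
    have hxE : (WithLp.toLp 2 x) ∈
        sphere (0 : EuclideanSpace ℝ (Fin 3)) 1 := mem_sphere_zero_iff_norm.mpr hnorm
    set m : sphere (0 : EuclideanSpace ℝ (Fin 3)) 1 := ⟨WithLp.toLp 2 x, hxE⟩ with hm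
    have h0 : g m = 0 := le_antisymm (hc m) (hgnn m)
    have hsum : (∑ k, (crossProduct x (W *ᵥ x) k) ^ 2) = 0 := by
      have hfne : f m ≠ 0 := (hpos m).ne'
      have : (∑ k, (crossProduct (fun i => (m : E) i) (W *ᵥ fun i => (m : E) i) k) ^ 2)
          * f m = 0 := h0
      have h2 := mul_eq_zero.1 this
      rcases h2 with h2 | h2
      · exact h2
      · exact absurd h2 hfne
    funext k
    have := (Finset.sum_eq_zero_iff_of_nonneg (fun k _ => sq_nonneg _)).1 hsum k
      (Finset.mem_univ k)
    simpa using pow_eq_zero_iff (n := 2) (by norm_num) |>.1 this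
  obtain ⟨m₀, hm₀⟩ := hm₀
  have hkey := integral_pos_iff_support_of_nonneg_ae
    (Filter.Eventually.of_forall hgnn) hgi
  rw [show (∫ m, (∑ k, (crossProduct (fun i => (m : EuclideanSpace ℝ (Fin 3)) i)
        (W *ᵥ fun i => (m : EuclideanSpace ℝ (Fin 3)) i) k) ^ 2) * f m ∂sphereSigma)
      = ∫ m, g m ∂sphereSigma from rfl, hkey]
  have hU : IsOpen (g ⁻¹' Set.Ioi (0:ℝ)) := isOpen_Ioi.preimage hgc
  have hUne : (g ⁻¹' Set.Ioi (0:ℝ)).Nonempty := ⟨m₀, hm₀⟩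
  have hsub : g ⁻¹' Set.Ioi (0:ℝ) ⊆ Function.support g := fun m hm => ne_of_gt hm
  calc (0 : ENNReal) < sphereSigma (g ⁻¹' Set.Ioi (0:ℝ)) := by
        rw [sphereSigma, Measure.smul_apply, smul_eq_mul]
        exact ENNReal.mul_pos (ENNReal.inv_ne_zero.2 (measure_ne_top _ _))
          (toSphere_open_pos hU hUne).ne'
    _ ≤ sphereSigma (Function.support g) := measure_mono hsub
end

section
/- Let E be a finite-dimensional real inner product space, let F₊, F₋ : E → ℝ be differentiable convex functions, set F = F₊ − F₋, let M : E → E be a self-adjoint positive semidefinite linear map, and let δt > 0. Suppose Q, Q⁺ ∈ E satisfy Q⁺ − Q = −δt · M μ, where μ = ∇F₊(Q⁺) − ∇F₋(Q). Then F(Q⁺) ≤ F(Q) − δt ⟨μ, M μ⟩; in particular F(Q⁺) ≤ F(Q). -/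
open scoped RealInnerProductSpace

lemma grad_ineq_aux
    {E : Type*} [NormedAddCommGroup E] [InnerProductSpace ℝ E] [FiniteDimensional ℝ E]
    (f : E → ℝ) (hf : Differentiable ℝ f) (hc : ConvexOn ℝ Set.univ f)
    (x y : E) : f x + ⟪gradient f x, y - x⟫ ≤ f y := by
  set v := y - x with hv
  -- the line map
  have hline : ∀ t : ℝ, (AffineMap.lineMap x y : ℝ →ᵃ[ℝ] E) t = t • v + x := by
    intro t
    rw [AffineMap.lineMap_apply_module]
    rw [hv]; module
  set g : ℝ → ℝ := fun t => f (t • v + x) with hg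
  have hgc : ConvexOn ℝ Set.univ g := by
    have := hc.comp_affineMap (AffineMap.lineMap x y : ℝ →ᵃ[ℝ] E)
    simpa [Function.comp_def, hline, Set.preimage_univ, hg] using this
  -- derivative of g at 0
  have hgrad : HasGradientAt f (gradient f x) x := (hf x).hasGradientAt
  have hF : HasFDerivAt f ((InnerProductSpace.toDual ℝ E) (gradient f x)) x := by
    rw [hasGradientAt_iff_hasFDerivAt] at hgrad; exact hgrad
  have hcurve : HasDerivAt (fun t : ℝ => t • v + x) v 0 := by
    have := ((hasDerivAt_id (0 : ℝ)).smul_const v).add_const x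
    simpa using this
  have hgd : HasDerivAt g (⟪gradient f x, v⟫) 0 := by
    have hF0 : HasFDerivAt f ((InnerProductSpace.toDual ℝ E) (gradient f x))
        ((fun t : ℝ => t • v + x) 0) := by simpa using hF
    have := hF0.comp_hasDerivAt 0 hcurve
    simpa [Function.comp_def, hg, InnerProductSpace.toDual_apply_apply] using this
  have hslope := hgc.le_slope_of_hasDerivAt (Set.mem_univ (0:ℝ)) (Set.mem_univ (1:ℝ))
    (by norm_num) hgd
  have hsl : slope g 0 1 = g 1 - g 0 := by simp [slope_def_field]
  rw [hsl] at hslope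
  have h1 : g 1 = f y := by simp [hg, hv]
  have h0 : g 0 = f x := by simp [hg]
  rw [h1, h0] at hslope
  linarith

/-- Unconditional discrete energy dissipation of the first-order convex-splitting scheme:
if Q⁺ − Q = −δt·Mμ with μ = ∇F₊(Q⁺) − ∇F₋(Q), F₊, F₋ differentiable convex,
M self-adjoint positive semidefinite, then F(Q⁺) ≤ F(Q) − δt⟨μ, Mμ⟩ for F = F₊ − F₋. -/
theorem convex_splitting_dissipation
    {E : Type*} [NormedAddCommGroup E] [InnerProductSpace ℝ E] [FiniteDimensional ℝ E]
    (Fp Fm : E → ℝ)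
    (hFp : Differentiable ℝ Fp) (hFm : Differentiable ℝ Fm)
    (hFpconv : ConvexOn ℝ Set.univ Fp) (hFmconv : ConvexOn ℝ Set.univ Fm)
    (M : E →ₗ[ℝ] E) (hMsa : ∀ x y : E, ⟪M x, y⟫ = ⟪x, M y⟫)
    (hMpsd : ∀ x : E, 0 ≤ ⟪x, M x⟫)
    (δt : ℝ) (hδt : 0 < δt)
    (Q Qp μ : E) (hμ : μ = gradient Fp Qp - gradient Fm Q)
    (hstep : Qp - Q = -(δt • M μ)) :
    Fp Qp - Fm Qp ≤ Fp Q - Fm Q - δt * ⟪μ, M μ⟫ := by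
  have h1 : Fp Qp + ⟪gradient Fp Qp, Q - Qp⟫ ≤ Fp Q := grad_ineq_aux Fp hFp hFpconv Qp Q
  have h2 : Fm Q + ⟪gradient Fm Q, Qp - Q⟫ ≤ Fm Qp := grad_ineq_aux Fm hFm hFmconv Q Qp
  have hkey : ⟪μ, Qp - Q⟫ = -(δt * ⟪μ, M μ⟫) := by
    rw [hstep, inner_neg_right, real_inner_smul_right]
  have hsplit : ⟪gradient Fp Qp, Q - Qp⟫ = -⟪gradient Fp Qp, Qp - Q⟫ := by
    rw [← inner_neg_right]; congr 1; abel
  have hμi : ⟪μ, Qp - Q⟫ = ⟪gradient Fp Qp, Qp - Q⟫ - ⟪gradient Fm Q, Qp - Q⟫ := by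
    rw [hμ, inner_sub_left]
  rw [hsplit] at h1
  rw [hμi] at hkey
  linarith
end

section
/- Let θ₁, θ₂, θ₃ ∈ (0,1) with θ₁ + θ₂ + θ₃ = 1 and θ = min{θ₁, θ₂, θ₃}. Then the 2×2 symmetric matrix [[(1−θ₁)/2, (θ₃−θ₂)/2], [(θ₃−θ₂)/2, (1−θ₁−(2/5)θ)/2]] is positive definite, and likewise the matrices obtained by cyclically permuting (θ₁, θ₂, θ₃). -/
open Matrix

lemma posdef2 {a b c : ℝ} (ha : 0 < a) (hd : b * b < a * c) :
    Matrix.PosDef !![a, b; b, c] := by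
  refine Matrix.PosDef.of_dotProduct_mulVec_pos ?_ ?_
  · ext i j
    fin_cases i <;> fin_cases j <;> simp [Matrix.conjTranspose, Matrix.vecHead, Matrix.vecTail]
  · intro x hx
    have h0 : x 0 ≠ 0 ∨ x 1 ≠ 0 := by
      by_contra h
      push_neg at h
      apply hx
      ext i; fin_cases i <;> simp [h.1, h.2]
    simp [Matrix.mulVec, dotProduct, Fin.sum_univ_two]
    have hc : 0 < c := by nlinarith [mul_self_nonneg b]
    by_contra hcon
    push_neg at hcon
    rcases h0 with h | h
    · have key : (0:ℝ) < c * (x 0 * (a * x 0 + b * x 1) + x 1 * (b * x 0 + c * x 1)) := by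
        nlinarith [sq_nonneg (b * x 0 + c * x 1), mul_pos (sub_pos.2 hd) (mul_self_pos.2 h)]
      nlinarith [mul_nonpos_of_nonneg_of_nonpos hc.le hcon]
    · have key : (0:ℝ) < a * (x 0 * (a * x 0 + b * x 1) + x 1 * (b * x 0 + c * x 1)) := by
        nlinarith [sq_nonneg (a * x 0 + b * x 1), mul_pos (sub_pos.2 hd) (mul_self_pos.2 h)]
      nlinarith [mul_nonpos_of_nonneg_of_nonpos ha.le hcon]

/-- Positive definiteness of the 2×2 blocks
[[(1−θ₁)/2, (θ₃−θ₂)/2], [(θ₃−θ₂)/2, (1−θ₁−(2/5)θ)/2]] (and its cyclic permutations)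
for θ₁, θ₂, θ₃ ∈ (0,1) summing to 1, θ = min{θ₁,θ₂,θ₃}. -/
theorem block3_posdef (θ₁ θ₂ θ₃ : ℝ)
    (h1 : θ₁ ∈ Set.Ioo (0 : ℝ) 1) (h2 : θ₂ ∈ Set.Ioo (0 : ℝ) 1) (h3 : θ₃ ∈ Set.Ioo (0 : ℝ) 1)
    (hsum : θ₁ + θ₂ + θ₃ = 1) :
    Matrix.PosDef !![(1 - θ₁) / 2, (θ₃ - θ₂) / 2;
                     (θ₃ - θ₂) / 2, (1 - θ₁ - (2/5) * min θ₁ (min θ₂ θ₃)) / 2] ∧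
    Matrix.PosDef !![(1 - θ₂) / 2, (θ₁ - θ₃) / 2;
                     (θ₁ - θ₃) / 2, (1 - θ₂ - (2/5) * min θ₁ (min θ₂ θ₃)) / 2] ∧
    Matrix.PosDef !![(1 - θ₃) / 2, (θ₂ - θ₁) / 2;
                     (θ₂ - θ₁) / 2, (1 - θ₃ - (2/5) * min θ₁ (min θ₂ θ₃)) / 2] := by
  obtain ⟨p1, q1⟩ := h1
  obtain ⟨p2, q2⟩ := h2
  obtain ⟨p3, q3⟩ := h3
  set θ := min θ₁ (min θ₂ θ₃) with hθ
  have hθ1 : θ ≤ θ₁ := min_le_left _ _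
  have hθ2 : θ ≤ θ₂ := le_trans (min_le_right _ _) (min_le_left _ _)
  have hθ3 : θ ≤ θ₃ := le_trans (min_le_right _ _) (min_le_right _ _)
  have hθ0 : 0 < θ := lt_min p1 (lt_min p2 p3)
  refine ⟨posdef2 (by linarith) ?_, posdef2 (by linarith) ?_, posdef2 (by linarith) ?_⟩
  · nlinarith [mul_pos p2 p3, mul_le_mul_of_nonneg_left hθ3 p2.le,
      mul_le_mul_of_nonneg_left hθ2 p3.le]
  · nlinarith [mul_pos p1 p3, mul_le_mul_of_nonneg_left hθ3 p1.le,
      mul_le_mul_of_nonneg_left hθ1 p3.le]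
  · nlinarith [mul_pos p1 p2, mul_le_mul_of_nonneg_left hθ2 p1.le,
      mul_le_mul_of_nonneg_left hθ1 p2.le]
end

section
/- Let θ₁, θ₂, θ₃ ∈ (0,1) with θ₁ + θ₂ + θ₃ = 1 and θ = min{θ₁, θ₂, θ₃}. Then the 2×2 symmetric matrix [[(9/8)(1 − θ₁ − θ/5), (3/8)(θ₂ − θ₃)], [(3/8)(θ₂ − θ₃), (3/8)(θ₁ + 1/3 − θ/5)]] is positive definite. -/
open Matrix

/-- Positive definiteness of the 2×2 block
[[(9/8)(1−θ₁−θ/5), (3/8)(θ₂−θ₃)], [(3/8)(θ₂−θ₃), (3/8)(θ₁+1/3−θ/5)]]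
for θ₁, θ₂, θ₃ ∈ (0,1) summing to 1, θ = min{θ₁,θ₂,θ₃}. -/
theorem block2_posdef (θ₁ θ₂ θ₃ : ℝ)
    (h1 : θ₁ ∈ Set.Ioo (0 : ℝ) 1) (h2 : θ₂ ∈ Set.Ioo (0 : ℝ) 1) (h3 : θ₃ ∈ Set.Ioo (0 : ℝ) 1)
    (hsum : θ₁ + θ₂ + θ₃ = 1) :
    Matrix.PosDef !![(9/8) * (1 - θ₁ - min θ₁ (min θ₂ θ₃) / 5), (3/8) * (θ₂ - θ₃);
                     (3/8) * (θ₂ - θ₃), (3/8) * (θ₁ + 1/3 - min θ₁ (min θ₂ θ₃) / 5)] := by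
  set m := min θ₁ (min θ₂ θ₃) with hm
  have hm1 : m ≤ θ₁ := min_le_left _ _
  have hm2 : m ≤ θ₂ := le_trans (min_le_right _ _) (min_le_left _ _)
  have hm3 : m ≤ θ₃ := le_trans (min_le_right _ _) (min_le_right _ _)
  have hm0 : 0 < m := lt_min h1.1 (lt_min h2.1 h3.1)
  obtain ⟨p1, q1⟩ := h1
  obtain ⟨p2, q2⟩ := h2
  obtain ⟨p3, q3⟩ := h3
  have ha : 0 < (9/8) * (1 - θ₁ - m / 5) := by nlinarith
  have hdet : (9/8) * (1 - θ₁ - m / 5) * ((3/8) * (θ₁ + 1/3 - m / 5))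
      - ((3/8) * (θ₂ - θ₃))^2 > 0 := by nlinarith [sq_nonneg (θ₂ - θ₃), mul_pos p2 p3, sq_nonneg m, mul_pos hm0 p1]
  rw [Matrix.posDef_iff_dotProduct_mulVec]
  constructor
  · rw [Matrix.IsHermitian]
    ext i j
    fin_cases i <;> fin_cases j <;>
      simp [Matrix.conjTranspose, Matrix.transpose, Matrix.vecHead, Matrix.vecTail]
  · intro x hx
    have hx01 : x 0 ≠ 0 ∨ x 1 ≠ 0 := by
      by_contra h
      push_neg at h
      exact hx (funext fun i => by fin_cases i <;> simp [h.1, h.2])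
    simp only [star_trivial, dotProduct, Matrix.mulVec, Fin.sum_univ_two, Matrix.of_apply,
      Matrix.cons_val', Matrix.cons_val_zero, Matrix.cons_val_one, Matrix.head_cons,
      Matrix.empty_val', Matrix.cons_val_fin_one, Matrix.head_fin_const]
    set A := (9/8) * (1 - θ₁ - m / 5)
    set B := (3/8) * (θ₁ + 1/3 - m / 5)
    set C := (3/8) * (θ₂ - θ₃)
    have key : 0 < A * (x 0 * (A * x 0 + C * x 1) + x 1 * (C * x 0 + B * x 1)) := by
      have h1 : A * (x 0 * (A * x 0 + C * x 1) + x 1 * (C * x 0 + B * x 1))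
          = (A * x 0 + C * x 1)^2 + (A * B - C^2) * (x 1)^2 := by ring
      rw [h1]
      rcases hx01 with h | h
      · rcases eq_or_ne (x 1) 0 with h1' | h1'
        · have hne : A * x 0 + C * x 1 ≠ 0 := by
            rw [h1']; simpa using mul_ne_zero (ne_of_gt ha) h
          nlinarith [sq_pos_of_ne_zero hne, sq_nonneg (x 1)]
        · nlinarith [sq_nonneg (A * x 0 + C * x 1), sq_pos_of_ne_zero h1']
      · nlinarith [sq_nonneg (A * x 0 + C * x 1), sq_pos_of_ne_zero h]
    nlinarith [key, sq_nonneg (x 0), sq_nonneg (x 1)]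
end

section
/- Let θ₁, θ₂, θ₃ ∈ (0,1) with θ₁ + θ₂ + θ₃ = 1 and θ = min{θ₁, θ₂, θ₃}. Then the 2×2 symmetric matrix [[(9/4)θ₁ − (9/4)θ₁² − (9/20)θ, (3/4)θ₁(θ₃ − θ₂)], [(3/4)θ₁(θ₃ − θ₂), (1/4)(1 − θ₁) − (1/4)(θ₂ − θ₃)² − (3/20)θ]] is positive definite. -/
open Matrix

lemma posdef_fin_two (a b c : ℝ) (ha : 0 < a) (hd : 0 < a * c - b ^ 2) :
    Matrix.PosDef !![a, b; b, c] := by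
  have hc : 0 < c := by nlinarith [sq_nonneg b]
  refine Matrix.PosDef.of_dotProduct_mulVec_pos ?_ ?_
  · ext i j
    fin_cases i <;> fin_cases j <;> simp [Matrix.conjTranspose_apply]
  · intro x hx
    have hxx : x 0 ≠ 0 ∨ x 1 ≠ 0 := by
      by_contra h
      push_neg at h
      exact hx (funext fun i => by fin_cases i <;> simp [h.1, h.2])
    simp [Matrix.mulVec, dotProduct, Fin.sum_univ_two]
    rcases hxx with h | h
    · have h0 : 0 < x 0 ^ 2 := by positivity
      nlinarith [sq_nonneg (b * x 0 + c * x 1), mul_pos hd h0]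
    · have h0 : 0 < x 1 ^ 2 := by positivity
      nlinarith [sq_nonneg (a * x 0 + b * x 1), mul_pos hd h0]

/-- Positive definiteness of the 2×2 block
[[(9/4)θ₁ − (9/4)θ₁² − (9/20)θ, (3/4)θ₁(θ₃−θ₂)],
 [(3/4)θ₁(θ₃−θ₂), (1/4)(1−θ₁) − (1/4)(θ₂−θ₃)² − (3/20)θ]]
for θ₁, θ₂, θ₃ ∈ (0,1) summing to 1, θ = min{θ₁,θ₂,θ₃}. -/
theorem block1_posdef (θ₁ θ₂ θ₃ : ℝ)
    (h1 : θ₁ ∈ Set.Ioo (0 : ℝ) 1) (h2 : θ₂ ∈ Set.Ioo (0 : ℝ) 1) (h3 : θ₃ ∈ Set.Ioo (0 : ℝ) 1)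
    (hsum : θ₁ + θ₂ + θ₃ = 1) :
    Matrix.PosDef !![(9/4) * θ₁ - (9/4) * θ₁ ^ 2 - (9/20) * min θ₁ (min θ₂ θ₃),
                       (3/4) * θ₁ * (θ₃ - θ₂);
                     (3/4) * θ₁ * (θ₃ - θ₂),
                       (1/4) * (1 - θ₁) - (1/4) * (θ₂ - θ₃) ^ 2
                         - (3/20) * min θ₁ (min θ₂ θ₃)] := by
  obtain ⟨h1a, h1b⟩ := h1
  obtain ⟨h2a, h2b⟩ := h2
  obtain ⟨h3a, h3b⟩ := h3
  have key : ∀ m : ℝ, 0 < m → m ≤ θ₁ → m ≤ θ₂ → m ≤ θ₃ →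
      Matrix.PosDef !![(9/4) * θ₁ - (9/4) * θ₁ ^ 2 - (9/20) * m,
                         (3/4) * θ₁ * (θ₃ - θ₂);
                       (3/4) * θ₁ * (θ₃ - θ₂),
                         (1/4) * (1 - θ₁) - (1/4) * (θ₂ - θ₃) ^ 2 - (3/20) * m] := by
    intro m hm hm1 hm2 hm3
    have p12 : θ₁ * θ₂ * m ≤ θ₁ * θ₂ * θ₃ :=
      mul_le_mul_of_nonneg_left hm3 (le_of_lt (mul_pos h1a h2a))
    have p23 : θ₂ * θ₃ * m ≤ θ₂ * θ₃ * θ₁ :=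
      mul_le_mul_of_nonneg_left hm1 (le_of_lt (mul_pos h2a h3a))
    have p13 : θ₁ * θ₃ * m ≤ θ₁ * θ₃ * θ₂ :=
      mul_le_mul_of_nonneg_left hm2 (le_of_lt (mul_pos h1a h3a))
    have hdet : (9/4 * θ₁ - 9/4 * θ₁ ^ 2 - 9/20 * m) *
          (1/4 * (1 - θ₁) - 1/4 * (θ₂ - θ₃) ^ 2 - 3/20 * m) -
          (3/4 * θ₁ * (θ₃ - θ₂)) ^ 2 =
        9/4 * (θ₁ * θ₂ * θ₃) - 9/20 * m * (θ₁*θ₂ + θ₁*θ₃ + θ₂*θ₃) + 27/400 * m^2 := by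
      have ht : θ₃ = 1 - θ₁ - θ₂ := by linarith
      rw [ht]; ring
    apply posdef_fin_two
    · nlinarith [mul_pos h1a h2a, mul_pos h1a h3a, mul_pos hm h1a]
    · rw [show (1:ℝ)/4 = 1/4 by norm_num] at *
      rw [hdet]
      nlinarith [p12, p23, p13, mul_pos (mul_pos h1a h2a) h3a, sq_nonneg m]
  exact key _ (lt_min h1a (lt_min h2a h3a)) (min_le_left _ _)
    (le_trans (min_le_right _ _) (min_le_left _ _))
    (le_trans (min_le_right _ _) (min_le_right _ _))
end
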